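/- As formal power series in q, Σ_{n≥0} q^{n(n+1)/2} / (−q; q)_n = Σ_{n≥1} n · q^{n(n−1)/2} / (−q; q)_n, i.e., Ramanujan's σ(q) equals the series with weight n and shifted triangular exponent. -/

import Mathlib

open PowerSeries Finset

/-- Ramanujan's `σ(q) = Σ_{n ≥ 0} q^{n(n+1)/2} / (−q;q)_n` as a formal power series over
`ℚ`: the term of index `m` has order at least `m`, so the `N`-th coefficient only
involves terms with `m ≤ N + 1`. -/
noncomputable def ramanujanSigma : PowerSeries ℚ :=
  PowerSeries.mk fun N =>
    coeff N (∑ m ∈ Finset.range (N + 2),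
      (X : PowerSeries ℚ) ^ (m * (m + 1) / 2) *
        (∏ k ∈ Finset.range m, (1 + (X : PowerSeries ℚ) ^ (k + 1)))⁻¹)

/-- `Σ_{n ≥ 1} n · q^{n(n−1)/2} / (−q;q)_n`: the term of index `n` has order
`n(n−1)/2 ≥ n − 1`, so the `N`-th coefficient only involves terms with `n ≤ N + 1`. -/
noncomputable def weightedSigma : PowerSeries ℚ :=
  PowerSeries.mk fun N =>
    coeff N (∑ n ∈ Finset.Icc 1 (N + 1),
      (n : PowerSeries ℚ) * (X : PowerSeries ℚ) ^ (n * (n - 1) / 2) *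
        (∏ k ∈ Finset.range n, (1 + (X : PowerSeries ℚ) ^ (k + 1)))⁻¹)

noncomputable def Aterm (m : ℕ) : PowerSeries ℚ :=
  (X : PowerSeries ℚ) ^ (m * (m + 1) / 2) *
    (∏ k ∈ Finset.range m, (1 + (X : PowerSeries ℚ) ^ (k + 1)))⁻¹

lemma constCoeff_prod (m : ℕ) :
    constantCoeff (∏ k ∈ Finset.range m, (1 + (X : PowerSeries ℚ) ^ (k + 1))) = 1 := by
  rw [map_prod]
  simp

lemma key (m : ℕ) :
    (X : PowerSeries ℚ) ^ ((m + 1) * m / 2) *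
      (∏ k ∈ Finset.range (m + 1), (1 + (X : PowerSeries ℚ) ^ (k + 1)))⁻¹
      = Aterm m - Aterm (m + 1) := by
  have hP : (∏ k ∈ Finset.range (m + 1), (1 + (X : PowerSeries ℚ) ^ (k + 1)))
      = (∏ k ∈ Finset.range m, (1 + (X : PowerSeries ℚ) ^ (k + 1))) * (1 + X ^ (m + 1)) :=
    Finset.prod_range_succ _ _
  have hu : (1 + (X : PowerSeries ℚ) ^ (m + 1)) * (1 + (X : PowerSeries ℚ) ^ (m + 1))⁻¹ = 1 :=
    PowerSeries.mul_inv_cancel _ (by simp)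
  have he1 : (m + 1) * m / 2 = m * (m + 1) / 2 := by rw [mul_comm]
  have he2 : (m + 1) * (m + 2) / 2 = m * (m + 1) / 2 + (m + 1) := by
    have h1 : (m + 1) * (m + 2) = m * (m + 1) + 2 * (m + 1) := by ring
    obtain ⟨c, hc⟩ := Nat.even_mul_succ_self m
    omega
  have hXe : (X : ℚ⟦X⟧) ^ (m * (m + 1) / 2 + (m + 1))
      = X ^ (m * (m + 1) / 2) * X ^ (m + 1) := pow_add _ _ _
  rw [Aterm, Aterm, hP, PowerSeries.mul_inv_rev, he1, he2, hXe]
  rw [eq_sub_iff_add_eq]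
  calc (X : PowerSeries ℚ) ^ (m * (m + 1) / 2) *
        ((1 + X ^ (m + 1))⁻¹ * (∏ k ∈ Finset.range m, (1 + (X : PowerSeries ℚ) ^ (k + 1)))⁻¹)
      + (X : PowerSeries ℚ) ^ (m * (m + 1) / 2) * X ^ (m + 1) *
        ((1 + X ^ (m + 1))⁻¹ * (∏ k ∈ Finset.range m, (1 + (X : PowerSeries ℚ) ^ (k + 1)))⁻¹)
      = (X : PowerSeries ℚ) ^ (m * (m + 1) / 2) *
        ((1 + X ^ (m + 1)) * (1 + X ^ (m + 1))⁻¹) *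
        (∏ k ∈ Finset.range m, (1 + (X : PowerSeries ℚ) ^ (k + 1)))⁻¹ := by ring
    _ = _ := by rw [hu, mul_one]

/-- `σ(q) = Σ_{n ≥ 1} n q^{n(n−1)/2} / (−q;q)_n`. -/
theorem stmt_5 : ramanujanSigma = weightedSigma := by
  ext N
  rw [ramanujanSigma, weightedSigma, coeff_mk, coeff_mk]
  have hIcc : Finset.Icc 1 (N + 1) = Finset.Ico 1 (N + 2) := (Finset.Ico_add_one_right_eq_Icc 1 (N + 1)).symm
  rw [hIcc, Finset.sum_Ico_eq_sum_range]
  have hsub : N + 2 - 1 = N + 1 := rfl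
  rw [hsub]
  have hterm : ∀ i ∈ Finset.range (N + 1),
      ((1 + i : ℕ) : PowerSeries ℚ) * (X : PowerSeries ℚ) ^ ((1 + i) * ((1 + i) - 1) / 2) *
        (∏ k ∈ Finset.range (1 + i), (1 + (X : PowerSeries ℚ) ^ (k + 1)))⁻¹
      = ((i : ℚ⟦X⟧) + 1) * (Aterm i - Aterm (i + 1)) := by
    intro i _
    have h1 : (1 + i) * ((1 + i) - 1) / 2 = (i + 1) * i / 2 := by
      rw [Nat.add_comm 1 i, Nat.add_sub_cancel]
    have h2 : 1 + i = i + 1 := by omega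
    rw [h1, h2, mul_assoc, key i]
    push_cast
    ring
  rw [Finset.sum_congr rfl hterm]
  have hsplit : ∀ i : ℕ, ((i : ℚ⟦X⟧) + 1) * (Aterm i - Aterm (i + 1))
      = (((i : ℚ⟦X⟧) + 1) * Aterm i - (((i + 1 : ℕ) : ℚ⟦X⟧) + 1) * Aterm (i + 1)) + Aterm (i + 1) := by
    intro i
    push_cast
    ring
  simp_rw [hsplit]
  rw [Finset.sum_add_distrib, Finset.sum_range_sub' (fun i => ((i : ℚ⟦X⟧) + 1) * Aterm i)]
  have hsum : ∑ m ∈ Finset.range (N + 2),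
      (X : PowerSeries ℚ) ^ (m * (m + 1) / 2) *
        (∏ k ∈ Finset.range m, (1 + (X : PowerSeries ℚ) ^ (k + 1)))⁻¹
      = ∑ m ∈ Finset.range (N + 2), Aterm m := rfl
  rw [hsum, Finset.sum_range_succ' Aterm (N + 1)]
  -- now goal: coeff N (Σ_{i<N+1} Aterm (i+1) + Aterm 0)
  --        = coeff N ((1*A0 - (N+2)*A(N+1)) + Σ_{i<N+1} Aterm (i+1))
  have hvanish : (coeff N) ((((N + 1 : ℕ) : ℚ⟦X⟧) + 1) * Aterm (N + 1)) = 0 := by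
    have hdvd : (X : PowerSeries ℚ) ^ (N + 1) ∣ (((N + 1 : ℕ) : ℚ⟦X⟧) + 1) * Aterm (N + 1) := by
      apply Dvd.dvd.mul_left
      rw [Aterm]
      apply Dvd.dvd.mul_right
      apply pow_dvd_pow
      have h1 : (N+1)*(N+1+1) = N*(N+1) + 2*(N+1) := by ring
      obtain ⟨c, hc⟩ := Nat.even_mul_succ_self N
      omega
    rw [PowerSeries.X_pow_dvd_iff] at hdvd
    exact hdvd N (by omega)
  rw [map_add, map_add, map_sub, hvanish]
  norm_num
  ring
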